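/- Let q be a prime power and let T, U, V, W be four distinct points of ℓ∞ in PG(2,q³) that do not lie on a common order-q-subline. Then there is exactly one tangent splash of ℓ∞ with centre T that contains the points U, V and W. -/

import Mathlib

namespace TangentSplashPaper

open Projectivization

/-- The point set of the projective plane `PG(2,K)`. -/
abbrev PGPoint (K : Type*) [Field K] := Projectivization K (Fin 3 → K)

/-- `ℓ` is a line of `PG(2,K)`: the set of points lying in a fixed
2-dimensional linear subspace. -/
def IsLine {K : Type*} [Field K] (ℓ : Set (PGPoint K)) : Prop :=
  ∃ W : Submodule K (Fin 3 → K), Module.finrank K W = 2 ∧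
    ℓ = {P : PGPoint K | P.submodule ≤ W}

/-- The distinguished line `ℓ∞` of `PG(2,K)`: points whose last homogeneous
coordinate vanishes. -/
def linf (K : Type*) [Field K] : Set (PGPoint K) := {P : PGPoint K | P.rep 2 = 0}

/-- The homography of `PG(2,K)` induced by a linear automorphism of `K³`;
as maps of point sets, these are exactly the elements of `PGL(3,K)`. -/
def hmap {K : Type*} [Field K] (f : (Fin 3 → K) ≃ₗ[K] (Fin 3 → K)) :
    PGPoint K → PGPoint K :=
  Projectivization.map f.toLinearMap f.injective

/-- The base subplane `PG(2,F)`: points admitting homogeneous coordinates in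
the subfield `F`. -/
def basePlane (F K : Type*) [Field F] [Field K] [Algebra F K] : Set (PGPoint K) :=
  {P : PGPoint K | ∃ v : Fin 3 → K, ∃ hv : v ≠ 0, P = Projectivization.mk K v hv ∧
    ∀ i, v i ∈ (algebraMap F K).range}

/-- An order-`q`-subplane of `PG(2,K)` (`q = |F|`): an image of `PG(2,F)`
under a homography. -/
def IsSubplane (F : Type*) {K : Type*} [Field F] [Field K] [Algebra F K]
    (S : Set (PGPoint K)) : Prop :=
  ∃ f : (Fin 3 → K) ≃ₗ[K] (Fin 3 → K), S = hmap f '' basePlane F K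

/-- An order-`q`-subline of `PG(2,K)`: the intersection of an order-`q`-subplane
with a line of `PG(2,K)` meeting it in `q+1` points. -/
def IsSubline (F : Type*) {K : Type*} [Field F] [Field K] [Algebra F K] (q : ℕ)
    (b : Set (PGPoint K)) : Prop :=
  ∃ S ℓ : Set (PGPoint K), IsSubplane F S ∧ IsLine ℓ ∧
    (S ∩ ℓ).ncard = q + 1 ∧ b = S ∩ ℓ

/-- The splash of a subplane `π` on `ℓ∞`: all points of `ℓ∞` lying on a line
of `PG(2,K)` spanned by two points of `π`. -/
def splash {K : Type*} [Field K] (π : Set (PGPoint K)) : Set (PGPoint K) :=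
  {X : PGPoint K | X ∈ linf K ∧ ∃ P Q : PGPoint K, P ∈ π ∧ Q ∈ π ∧ P ≠ Q ∧
    ∃ ℓ : Set (PGPoint K), IsLine ℓ ∧ P ∈ ℓ ∧ Q ∈ ℓ ∧ X ∈ ℓ}

/-- `S` is a tangent splash of `ℓ∞` with centre `T`: `S` is the splash of some
order-`q`-subplane meeting `ℓ∞` exactly in the point `T`. -/
def IsTangentSplash (F : Type*) {K : Type*} [Field F] [Field K] [Algebra F K]
    (S : Set (PGPoint K)) (T : PGPoint K) : Prop :=
  ∃ π : Set (PGPoint K), IsSubplane F π ∧ π ∩ linf K = {T} ∧ S = splash π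

/-- The set `t_P`: points of `ℓ∞` lying on the extension of a line of the
subplane `π` through the point `P` (lines of `π` are the lines of `PG(2,K)`
meeting `π` in `q+1` points). -/
def pencilTrace {K : Type*} [Field K] (q : ℕ) (π : Set (PGPoint K))
    (P : PGPoint K) : Set (PGPoint K) :=
  {X : PGPoint K | X ∈ linf K ∧ ∃ ℓ : Set (PGPoint K), IsLine ℓ ∧ P ∈ ℓ ∧
    (π ∩ ℓ).ncard = q + 1 ∧ X ∈ ℓ}

section Basics
variable {K : Type} [Field K]

theorem vne {x y : K} (h : ¬(x = 0 ∧ y = 0)) : ![x, y, 0] ≠ 0 := by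
  intro he
  exact h ⟨by simpa using congrFun he 0, by simpa using congrFun he 1⟩

theorem mem_linf_mk {v : Fin 3 → K} (hv : v ≠ 0) :
    Projectivization.mk K v hv ∈ linf K ↔ v 2 = 0 := by
  obtain ⟨a, ha⟩ := Projectivization.exists_smul_eq_mk_rep K v hv
  unfold linf
  simp only [Set.mem_setOf_eq, ← ha, Pi.smul_apply, Units.smul_def, smul_eq_mul,
    mul_eq_zero]
  simp [a.ne_zero]

theorem mk_smul_eq {v : Fin 3 → K} (hv : v ≠ 0) {c : K} (hc : c ≠ 0) :
    Projectivization.mk K (c • v) (smul_ne_zero hc hv) = Projectivization.mk K v hv := by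
  rw [Projectivization.mk_eq_mk_iff']
  exact ⟨c, rfl⟩

theorem pt_eq_iff {x y x' y' : K} (h : ¬(x = 0 ∧ y = 0)) (h' : ¬(x' = 0 ∧ y' = 0)) :
    Projectivization.mk K ![x, y, 0] (vne h) = Projectivization.mk K ![x', y', 0] (vne h') ↔
      x * y' = y * x' := by
  rw [Projectivization.mk_eq_mk_iff']
  constructor
  · rintro ⟨a, ha⟩
    have h0 : a * x' = x := by simpa using congrFun ha 0
    have h1 : a * y' = y := by simpa using congrFun ha 1
    rw [← h0, ← h1]; ring
  · intro hc
    by_cases hx' : x' ≠ 0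
    · refine ⟨x / x', funext fun i => ?_⟩
      fin_cases i <;> simp [Pi.smul_apply, smul_eq_mul] <;> field_simp <;> linear_combination hc
    · push_neg at hx'
      have hy' : y' ≠ 0 := fun hy => h' ⟨hx', hy⟩
      refine ⟨y / y', funext fun i => ?_⟩
      fin_cases i <;> simp [Pi.smul_apply, smul_eq_mul] <;> field_simp <;>
        linear_combination -hc

end Basics

section Basics2
variable {K : Type} [Field K]

theorem linf_rep {X : PGPoint K} (hX : X ∈ linf K) :
    ∃ (x y : K) (h : ¬(x = 0 ∧ y = 0)), X = Projectivization.mk K ![x, y, 0] (vne h) := by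
  have h2 : X.rep 2 = 0 := hX
  have hr : X.rep = ![X.rep 0, X.rep 1, 0] := by
    funext i; fin_cases i <;> simp [h2]
  have h : ¬(X.rep 0 = 0 ∧ X.rep 1 = 0) := by
    rintro ⟨h0, h1⟩
    apply X.rep_nonzero
    rw [hr, h0, h1]
    funext i; fin_cases i <;> simp
  refine ⟨X.rep 0, X.rep 1, h, ?_⟩
  conv_lhs => rw [← X.mk_rep]
  rw [Projectivization.mk_eq_mk_iff']
  exact ⟨1, by rw [one_smul, ← hr]⟩

/-- dot product as a linear map -/
noncomputable def dotL {R : Type} [Field R] (n : Fin 3 → R) : (Fin 3 → R) →ₗ[R] R :=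
  ∑ i, (n i) • (LinearMap.proj i)

theorem dotL_apply {R : Type} [Field R] (n f : Fin 3 → R) :
    dotL n f = ∑ i, n i * f i := by
  simp [dotL, LinearMap.sum_apply, LinearMap.proj_apply, smul_eq_mul]

theorem dotL_ne_zero {R : Type} [Field R] {n : Fin 3 → R} (hn : n ≠ 0) : dotL n ≠ 0 := by
  obtain ⟨i, hi⟩ : ∃ i, n i ≠ 0 := by
    by_contra h; push_neg at h; exact hn (funext h)
  intro hc
  apply hi
  have := congrArg (fun φ => (φ : (Fin 3 → R) →ₗ[R] R) (Pi.single i 1)) hc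
  simpa [dotL_apply, Pi.single_apply, Finset.sum_ite_eq'] using this

theorem ker_finrank_two {R V : Type} [Field R] [AddCommGroup V] [Module R V]
    [FiniteDimensional R V] (h3 : Module.finrank R V = 3) (φ : V →ₗ[R] R) (hφ : φ ≠ 0) :
    Module.finrank R (LinearMap.ker φ) = 2 := by
  have hr : LinearMap.range φ = ⊤ := by
    rcases Ideal.eq_bot_or_top (LinearMap.range φ) with h | h
    · exact absurd (LinearMap.range_eq_bot.mp h) hφ
    · exact h
  have := LinearMap.finrank_range_add_finrank_ker φ
  rw [hr, finrank_top, Module.finrank_self, h3] at this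
  omega

theorem finrank_pi3 : Module.finrank K (Fin 3 → K) = 3 := by simp

theorem isLine_linf : IsLine (linf K) := by
  refine ⟨LinearMap.ker (LinearMap.proj 2), ?_, ?_⟩
  · refine ker_finrank_two finrank_pi3 _ ?_
    intro hc
    have := congrArg (fun φ => (φ : (Fin 3 → K) →ₗ[K] K) (Pi.single 2 1)) hc
    simpa using this
  · ext X
    simp only [Set.mem_setOf_eq]
    rw [Projectivization.submodule_eq, Submodule.span_singleton_le_iff_mem]
    simp only [LinearMap.mem_ker, LinearMap.proj_apply]
    rfl

end Basics2

section Helpers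
variable {F K : Type} [Field F] [Field K] [Algebra F K]

/-- coordinatewise embedding of `F³` into `K³` -/
noncomputable def ιv (F : Type) {K : Type} [Field F] [Field K] [Algebra F K]
    (f : Fin 3 → F) : Fin 3 → K := fun i => algebraMap F K (f i)

theorem ιv_ne {f : Fin 3 → F} (hf : f ≠ 0) : ιv F (K := K) f ≠ 0 := by
  intro hc
  apply hf
  funext i
  have : algebraMap F K (f i) = 0 := congrFun hc i
  exact (algebraMap F K).injective (by simpa using this)

theorem ιv_eq_iff {f f' : Fin 3 → F} : ιv F (K := K) f = ιv F f' ↔ f = f' := by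
  constructor
  · intro h; funext i
    exact (algebraMap F K).injective (congrFun h i)
  · rintro rfl; rfl

theorem dotL_ιv (n f : Fin 3 → F) :
    dotL (ιv F (K := K) n) (ιv F f) = algebraMap F K (dotL n f) := by
  simp [dotL_apply, ιv, map_sum, map_mul]

theorem ιv_smul (c : F) (f : Fin 3 → F) :
    ιv F (K := K) (c • f) = algebraMap F K c • ιv F f := by
  funext i; simp [ιv, Algebra.smul_def]

theorem mem_subplane_iff (g : (Fin 3 → K) ≃ₗ[K] (Fin 3 → K)) (X : PGPoint K) :
    X ∈ hmap g '' basePlane F K ↔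
      ∃ (f : Fin 3 → F) (hf : f ≠ 0),
        X = Projectivization.mk K (g (ιv F f))
          (fun hc => ιv_ne hf (g.map_eq_zero_iff.mp hc)) := by
  constructor
  · rintro ⟨P, ⟨v, hv, rfl, hco⟩, rfl⟩
    choose f hfv using hco
    have hveq : v = ιv F f := by funext i; exact (hfv i).symm
    subst hveq
    have hf : f ≠ 0 := by
      rintro rfl
      exact hv (by funext i; simp [ιv])
    refine ⟨f, hf, ?_⟩
    rw [hmap, Projectivization.map_mk]
    rfl
  · rintro ⟨f, hf, rfl⟩
    refine ⟨Projectivization.mk K (ιv F f) (ιv_ne hf), ⟨ιv F f, ιv_ne hf, rfl,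
      fun i => ⟨f i, rfl⟩⟩, ?_⟩
    rw [hmap, Projectivization.map_mk]
    rfl

theorem pts_ne (g : (Fin 3 → K) ≃ₗ[K] (Fin 3 → K)) {f f' : Fin 3 → F}
    (hind : LinearIndependent F ![f, f']) (h h') :
    Projectivization.mk K (g (ιv F f)) h ≠ Projectivization.mk K (g (ιv F f')) h' := by
  have hpair := LinearIndependent.pair_iff.mp hind
  intro hc
  rw [Projectivization.mk_eq_mk_iff'] at hc
  obtain ⟨a, ha⟩ := hc
  rw [← map_smul, g.injective.eq_iff] at ha
  have hf' : f' ≠ 0 := by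
    rintro rfl
    exact one_ne_zero (hpair 0 1 (by simp)).2
  obtain ⟨i, hi⟩ : ∃ i, f' i ≠ 0 := by
    by_contra hcon; push_neg at hcon; exact hf' (funext hcon)
  have hai : a * algebraMap F K (f' i) = algebraMap F K (f i) := congrFun ha i
  have hne : algebraMap F K (f' i) ≠ 0 := by
    simpa using hi
  have haF : a = algebraMap F K (f i / f' i) := by
    rw [map_div₀, eq_div_iff hne]
    exact hai
  rw [haF, ← ιv_smul, ιv_eq_iff] at ha
  have := (hpair 1 (-(f i / f' i)) (by rw [one_smul, neg_smul, ← sub_eq_add_neg, sub_eq_zero]; exact ha.symm)).1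
  exact one_ne_zero this

theorem annih2 {n : Fin 3 → F} (hn : n ≠ 0) :
    ∃ f f' : Fin 3 → F, LinearIndependent F ![f, f'] ∧ dotL n f = 0 ∧ dotL n f' = 0 := by
  have h2 : Module.finrank F (LinearMap.ker (dotL n)) = 2 :=
    ker_finrank_two (by simp) _ (dotL_ne_zero hn)
  let b := Module.finBasisOfFinrankEq F (LinearMap.ker (dotL n)) h2
  have hind : LinearIndependent F fun i : Fin 2 => ((b i : Fin 3 → F)) := by
    have := b.linearIndependent.map' (LinearMap.ker (dotL n)).subtype
      (Submodule.ker_subtype _)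
    exact this
  refine ⟨b 0, b 1, ?_, (b 0).2, (b 1).2⟩
  have : ![((b 0 : Fin 3 → F)), (b 1 : Fin 3 → F)] = fun i : Fin 2 => ((b i : Fin 3 → F)) := by
    funext i; fin_cases i <;> rfl
  rw [this]
  exact hind

theorem exists_annih (f f' : Fin 3 → F) :
    ∃ n : Fin 3 → F, n ≠ 0 ∧ dotL n f = 0 ∧ dotL n f' = 0 := by
  set ψ : (Fin 3 → F) →ₗ[F] F × F := (dotL f).prod (dotL f') with hψ
  have hker : LinearMap.ker ψ ≠ ⊥ := by
    intro hc
    have h1 := LinearMap.finrank_range_add_finrank_ker ψ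
    rw [hc, finrank_bot] at h1
    have h2 : Module.finrank F (LinearMap.range ψ) ≤ 2 := by
      have := Submodule.finrank_le (LinearMap.range ψ)
      simpa using this
    simp at h1
    omega
  obtain ⟨m, hm, hm0⟩ := Submodule.exists_mem_ne_zero_of_ne_bot hker
  have := LinearMap.mem_ker.mp hm
  rw [hψ, LinearMap.prod_apply] at this
  have h1 : dotL f m = 0 := congrArg Prod.fst this
  have h2 : dotL f' m = 0 := congrArg Prod.snd this
  refine ⟨m, hm0, ?_, ?_⟩
  · simpa [dotL_apply, mul_comm] using h1
  · simpa [dotL_apply, mul_comm] using h2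

end Helpers

section Master
variable {F K : Type} [Field F] [Field K] [Algebra F K]

theorem mem_splash_iff (g : (Fin 3 → K) ≃ₗ[K] (Fin 3 → K)) (X : PGPoint K) :
    X ∈ splash (hmap g '' basePlane F K) ↔
      X ∈ linf K ∧ ∃ n : Fin 3 → F, n ≠ 0 ∧ dotL (ιv F n) (g.symm X.rep) = 0 := by
  constructor
  · rintro ⟨hX, P, Q, hP, hQ, hPQ, ℓ, ⟨Wℓ, hW2, rfl⟩, hPl, hQl, hXl⟩
    refine ⟨hX, ?_⟩
    rw [mem_subplane_iff] at hP hQ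
    obtain ⟨f, hf, rfl⟩ := hP
    obtain ⟨f', hf', rfl⟩ := hQ
    set v := g (ιv F f) with hv
    set w := g (ιv F f') with hw
    have hvne : v ≠ 0 := fun hc => ιv_ne hf (g.map_eq_zero_iff.mp hc)
    have hwne : w ≠ 0 := fun hc => ιv_ne hf' (g.map_eq_zero_iff.mp hc)
    have hmemv : v ∈ Wℓ := by
      have h := hPl
      simp only [Set.mem_setOf_eq, Projectivization.submodule_mk,
        Submodule.span_singleton_le_iff_mem] at h
      exact h
    have hmemw : w ∈ Wℓ := by
      have h := hQl
      simp only [Set.mem_setOf_eq, Projectivization.submodule_mk,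
        Submodule.span_singleton_le_iff_mem] at h
      exact h
    have hmemX : X.rep ∈ Wℓ := by
      have h := hXl
      simp only [Set.mem_setOf_eq] at h
      rw [Projectivization.submodule_eq, Submodule.span_singleton_le_iff_mem] at h
      exact h
    have hind : LinearIndependent K ![v, w] := by
      rw [LinearIndependent.pair_iff]
      intro s t hst
      have hs : s = 0 := by
        by_contra hs
        apply hPQ
        rw [Projectivization.mk_eq_mk_iff']
        refine ⟨-(t / s), smul_right_injective _ hs ?_⟩
        show s • (-(t / s) • w) = s • v
        rw [smul_smul]
        have hts : s * -(t / s) = -t := by field_simp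
        rw [hts, neg_smul]
        exact (eq_neg_of_add_eq_zero_left hst).symm
      refine ⟨hs, ?_⟩
      rw [hs, zero_smul, zero_add] at hst
      rcases smul_eq_zero.mp hst with h | h
      · exact h
      · exact absurd h hwne
    have hsp : Submodule.span K {v, w} = Wℓ := by
      apply Submodule.eq_of_le_of_finrank_eq
      · rw [Submodule.span_le]
        intro z hz
        rcases hz with rfl | hz
        · exact hmemv
        · rcases hz with rfl
          exact hmemw
      · rw [hW2]
        have h := finrank_span_eq_card hind
        rw [show Set.range ![v, w] = {v, w} from Matrix.range_cons_cons_empty v w _] at h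
        simpa using h
    rw [← hsp] at hmemX
    obtain ⟨x', y', hxy⟩ := Submodule.mem_span_pair.mp hmemX
    obtain ⟨n, hn0, hd1, hd2⟩ := exists_annih f f'
    refine ⟨n, hn0, ?_⟩
    have hrep : g.symm X.rep = x' • ιv F f + y' • ιv F f' := by
      rw [← hxy]
      simp [hv, hw]
    rw [hrep, map_add, map_smul, map_smul, dotL_ιv, dotL_ιv, hd1, hd2]
    simp
  · rintro ⟨hX, n, hn0, hcond⟩
    refine ⟨hX, ?_⟩
    obtain ⟨f, f', hind, hd1, hd2⟩ := annih2 hn0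
    have hf : f ≠ 0 := by simpa using hind.ne_zero 0
    have hf' : f' ≠ 0 := by simpa using hind.ne_zero 1
    set φ : (Fin 3 → K) →ₗ[K] K := (dotL (ιv F n)) ∘ₗ g.symm.toLinearMap with hφ
    have hφne : φ ≠ 0 := by
      obtain ⟨i, hi⟩ : ∃ i, n i ≠ 0 := by
        by_contra hc; push_neg at hc; exact hn0 (funext hc)
      intro hc
      have h := congrArg (fun ψ => (ψ : (Fin 3 → K) →ₗ[K] K) (g (Pi.single i 1))) hc
      simp only [hφ, LinearMap.comp_apply, LinearEquiv.coe_coe, LinearMap.zero_apply,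
        LinearEquiv.symm_apply_apply] at h
      rw [dotL_apply] at h
      simp only [ιv, Pi.single_apply, mul_ite, mul_one, mul_zero,
        Finset.sum_ite_eq', Finset.mem_univ, if_true] at h
      exact hi ((algebraMap F K).injective (by simpa using h))
    have hker2 : Module.finrank K (LinearMap.ker φ) = 2 :=
      ker_finrank_two finrank_pi3 φ hφne
    have hfmem : φ (g (ιv F f)) = 0 := by
      simp only [hφ, LinearMap.comp_apply, LinearEquiv.coe_coe,
        LinearEquiv.symm_apply_apply]
      rw [dotL_ιv, hd1, map_zero]
    have hf'mem : φ (g (ιv F f')) = 0 := by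
      simp only [hφ, LinearMap.comp_apply, LinearEquiv.coe_coe,
        LinearEquiv.symm_apply_apply]
      rw [dotL_ιv, hd2, map_zero]
    refine ⟨Projectivization.mk K (g (ιv F f)) (fun hc => ιv_ne hf (g.map_eq_zero_iff.mp hc)),
      Projectivization.mk K (g (ιv F f')) (fun hc => ιv_ne hf' (g.map_eq_zero_iff.mp hc)),
      (mem_subplane_iff g _).mpr ⟨f, hf, rfl⟩,
      (mem_subplane_iff g _).mpr ⟨f', hf', rfl⟩,
      pts_ne g hind _ _,
      {P | P.submodule ≤ LinearMap.ker φ}, ⟨_, hker2, rfl⟩, ?_, ?_, ?_⟩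
    · simp only [Set.mem_setOf_eq, Projectivization.submodule_mk,
        Submodule.span_singleton_le_iff_mem, LinearMap.mem_ker]
      exact hfmem
    · simp only [Set.mem_setOf_eq, Projectivization.submodule_mk,
        Submodule.span_singleton_le_iff_mem, LinearMap.mem_ker]
      exact hf'mem
    · simp only [Set.mem_setOf_eq]
      rw [Projectivization.submodule_eq, Submodule.span_singleton_le_iff_mem]
      simpa [hφ] using hcond

end Master

section Coords
variable {K : Type} [Field K]

theorem mk_eq_of_eq {v v' : Fin 3 → K} (h : v = v') (hv : v ≠ 0) (hv' : v' ≠ 0) :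
    Projectivization.mk K v hv = Projectivization.mk K v' hv' := by subst h; rfl

variable {t₁ t₂ u₁ u₂ : K}

theorem hnt (hD : u₁ * t₂ - u₂ * t₁ ≠ 0) : ¬(t₁ = 0 ∧ t₂ = 0) := by
  rintro ⟨rfl, rfl⟩; simp at hD

theorem hnu (hD : u₁ * t₂ - u₂ * t₁ ≠ 0) : ¬(u₁ = 0 ∧ u₂ = 0) := by
  rintro ⟨rfl, rfl⟩; simp at hD

theorem nzc (hD : u₁ * t₂ - u₂ * t₁ ≠ 0) (c : K) :
    ¬(u₁ + c * t₁ = 0 ∧ u₂ + c * t₂ = 0) := by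
  rintro ⟨h1, h2⟩
  apply hD
  linear_combination t₂ * h1 - t₁ * h2

/-- The point of `ℓ∞` with coordinate `c` relative to base points `U`, `T`. -/
noncomputable def mcoord (hD : u₁ * t₂ - u₂ * t₁ ≠ 0) (c : K) : PGPoint K :=
  Projectivization.mk K ![u₁ + c * t₁, u₂ + c * t₂, 0] (vne (nzc hD c))

theorem mcoord_inj (hD : u₁ * t₂ - u₂ * t₁ ≠ 0) {c c' : K}
    (h : mcoord hD c = mcoord hD c') : c = c' := by
  rw [mcoord, mcoord, pt_eq_iff (nzc hD c) (nzc hD c')] at h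
  have h2 : (c' - c) * (u₁ * t₂ - u₂ * t₁) = 0 := by linear_combination h
  rcases mul_eq_zero.mp h2 with h3 | h3
  · exact (sub_eq_zero.mp h3).symm
  · exact absurd h3 hD

theorem mcoord_ne_T (hD : u₁ * t₂ - u₂ * t₁ ≠ 0) (c : K) :
    mcoord hD c ≠ Projectivization.mk K ![t₁, t₂, 0] (vne (hnt hD)) := by
  rw [mcoord, Ne, pt_eq_iff (nzc hD c) (hnt hD)]
  intro h
  exact hD (by linear_combination h)

theorem mcoord_zero (hD : u₁ * t₂ - u₂ * t₁ ≠ 0) :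
    mcoord hD 0 = Projectivization.mk K ![u₁, u₂, 0] (vne (hnu hD)) := by
  exact mk_eq_of_eq (by funext i; fin_cases i <;> simp) _ _

theorem mcoord_mem_linf (hD : u₁ * t₂ - u₂ * t₁ ≠ 0) (c : K) : mcoord hD c ∈ linf K := by
  rw [mcoord, mem_linf_mk]; simp

theorem exists_mcoord (hD : u₁ * t₂ - u₂ * t₁ ≠ 0) {X : PGPoint K} (hX : X ∈ linf K)
    (hXT : X ≠ Projectivization.mk K ![t₁, t₂, 0] (vne (hnt hD))) :
    ∃ c : K, X = mcoord hD c := by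
  obtain ⟨x, y, hxy, rfl⟩ := linf_rep hX
  have he : x * t₂ - y * t₁ ≠ 0 := by
    intro h0
    exact hXT ((pt_eq_iff hxy (hnt hD)).mpr (by linear_combination h0))
  refine ⟨(u₁ * y - u₂ * x) / (x * t₂ - y * t₁), ?_⟩
  rw [mcoord, pt_eq_iff hxy (nzc hD _)]
  field_simp
  ring
end Coords

section Subline
variable {F K : Type} [Field F] [Field K] [Algebra F K] [Fintype F]

theorem subline_exists {q : ℕ} (hF : Fintype.card F = q) {t₁ t₂ u₁ u₂ a : K}
    (hD : u₁ * t₂ - u₂ * t₁ ≠ 0) (ha : a ≠ 0) (lam : F) :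
    ∃ b : Set (PGPoint K), IsSubline F q b ∧
      Projectivization.mk K ![t₁, t₂, 0] (vne (hnt hD)) ∈ b ∧
      Projectivization.mk K ![u₁, u₂, 0] (vne (hnu hD)) ∈ b ∧
      mcoord hD a ∈ b ∧ mcoord hD (algebraMap F K lam * a) ∈ b := by
  set M : Matrix (Fin 3) (Fin 3) K := !![u₁, a*t₁, 0; u₂, a*t₂, 0; 0, 0, 1] with hM
  have hdet : M.det = a * (u₁ * t₂ - u₂ * t₁) := by
    rw [hM, Matrix.det_fin_three]
    simp
    ring
  have hinv : Invertible M := M.invertibleOfIsUnitDet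
    (by rw [hdet]; exact (mul_ne_zero ha hD).isUnit)
  set g := M.toLinearEquiv' hinv with hg
  have himg : ∀ f : Fin 3 → F, g (ιv F f) =
      ![algebraMap F K (f 0) * u₁ + algebraMap F K (f 1) * (a*t₁),
        algebraMap F K (f 0) * u₂ + algebraMap F K (f 1) * (a*t₂),
        algebraMap F K (f 2)] := by
    intro f
    show M.mulVec (ιv F f) = _
    funext j
    fin_cases j <;>
      simp [hM, Matrix.mulVec, dotProduct, Fin.sum_univ_three, ιv] <;> ring
  set Tpt := Projectivization.mk K ![t₁, t₂, 0] (vne (hnt hD)) with hT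
  set R : Set (PGPoint K) := Set.range (fun x : F => mcoord hD (algebraMap F K x * a))
    with hR
  have hkey : (hmap g '' basePlane F K) ∩ linf K = insert Tpt R := by
    ext X
    constructor
    · rintro ⟨hXS, hXl⟩
      obtain ⟨f, hf, hXeq⟩ := (mem_subplane_iff g X).mp hXS
      subst hXeq
      have h2 : (g (ιv F f)) 2 = 0 := (mem_linf_mk _).mp hXl
      rw [himg] at h2
      simp only [Matrix.cons_val_two, Matrix.tail_cons, Matrix.head_cons] at h2
      have hf2 : f 2 = 0 := by
        apply (algebraMap F K).injective; simpa using h2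
      by_cases hf0 : f 0 = 0
      · left
        have hf1 : algebraMap F K (f 1) * a ≠ 0 := by
          refine mul_ne_zero ?_ ha
          simp only [ne_eq, map_eq_zero]
          intro h1
          exact hf (by funext i; fin_cases i <;> simp [hf0, h1, hf2])
        calc Projectivization.mk K (g (ιv F f)) _
            = Projectivization.mk K ((algebraMap F K (f 1) * a) • ![t₁, t₂, 0])
              (smul_ne_zero hf1 (vne (hnt hD))) := by
              apply mk_eq_of_eq
              rw [himg]
              funext i; fin_cases i <;> simp [hf0, hf2] <;> ring
          _ = Tpt := mk_smul_eq _ hf1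
      · right
        refine ⟨f 1 / f 0, ?_⟩
        have hι0 : algebraMap F K (f 0) ≠ 0 := by simpa using hf0
        calc (fun x : F => mcoord hD (algebraMap F K x * a)) (f 1 / f 0)
            = Projectivization.mk K ((algebraMap F K (f 0)) •
                ![u₁ + (algebraMap F K (f 1 / f 0) * a) * t₁,
                  u₂ + (algebraMap F K (f 1 / f 0) * a) * t₂, 0])
                (smul_ne_zero hι0 (vne (nzc hD _))) := (mk_smul_eq _ hι0).symm
          _ = Projectivization.mk K (g (ιv F f)) _ := by
              apply mk_eq_of_eq
              rw [himg]
              funext i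
              fin_cases i <;>
                simp [map_div₀, hf2, mul_add, mul_comm, mul_assoc, mul_left_comm] <;>
                field_simp <;> simp
    · intro hX
      rcases hX with rfl | ⟨x, rfl⟩
      · constructor
        · rw [mem_subplane_iff g]
          refine ⟨![0, 1, 0], by intro h; simpa using congrFun h 1, ?_⟩
          have : a • ![t₁, t₂, 0] = g (ιv F ![0, 1, 0]) := by
            rw [himg]
            funext i; fin_cases i <;> simp <;> ring
          calc Tpt = Projectivization.mk K (a • ![t₁, t₂, 0])
                (smul_ne_zero ha (vne (hnt hD))) := (mk_smul_eq _ ha).symm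
            _ = _ := mk_eq_of_eq this _ _
        · rw [hT, mem_linf_mk]; simp
      · constructor
        · rw [mem_subplane_iff g]
          refine ⟨![1, x, 0], by intro h; simpa using congrFun h 0, ?_⟩
          apply mk_eq_of_eq
          rw [himg]
          funext i; fin_cases i <;> simp <;> ring
        · exact mcoord_mem_linf hD _
  have hTR : Tpt ∉ R := by
    rintro ⟨x, hx⟩
    exact mcoord_ne_T hD _ hx
  have hRcard : R.ncard = q := by
    rw [hR, ← Set.image_univ, Set.ncard_image_of_injective _ ?_, Set.ncard_univ,
      Nat.card_eq_fintype_card, hF]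
    intro x y hxy
    have h1 := mcoord_inj hD hxy
    exact (algebraMap F K).injective (mul_right_cancel₀ ha h1)
  have hncard : ((hmap g '' basePlane F K) ∩ linf K).ncard = q + 1 := by
    rw [hkey, Set.ncard_insert_of_notMem hTR (Set.finite_range _), hRcard]
  refine ⟨(hmap g '' basePlane F K) ∩ linf K,
    ⟨hmap g '' basePlane F K, linf K, ⟨g, rfl⟩, isLine_linf, hncard, rfl⟩, ?_, ?_, ?_, ?_⟩
  · rw [hkey]; exact Set.mem_insert _ _
  · rw [hkey]
    right
    refine ⟨0, ?_⟩
    have h0 : algebraMap F K 0 * a = 0 := by simp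
    show mcoord hD ((algebraMap F K) 0 * a) = _
    rw [h0]
    exact mcoord_zero hD
  · rw [hkey]
    right
    exact ⟨1, by simp⟩
  · rw [hkey]
    right
    exact ⟨lam, rfl⟩

end Subline

section UniqHelpers
variable {F K : Type} [Field F] [Field K] [Algebra F K]

theorem hFind {a b : K} (ha : a ≠ 0) (hab : ∀ lam : F, b ≠ algebraMap F K lam * a)
    (p q : F) (h : algebraMap F K p * a + algebraMap F K q * b = 0) : p = 0 ∧ q = 0 := by
  by_cases hq : q = 0
  · refine ⟨?_, hq⟩
    rw [hq, map_zero, zero_mul, add_zero, mul_eq_zero] at h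
    rcases h with h | h
    · simpa using h
    · exact absurd h ha
  · exfalso
    apply hab (-(p / q))
    have hιq : algebraMap F K q ≠ 0 := by simpa using hq
    calc b = -(algebraMap F K p * a) / algebraMap F K q := by
          rw [eq_div_iff hιq]; linear_combination h
      _ = algebraMap F K (-(p / q)) * a := by rw [map_neg, map_div₀]; ring

theorem dotL_comm {R : Type} [Field R] (v w : Fin 3 → R) : dotL v w = dotL w v := by
  simp [dotL_apply, mul_comm]

theorem dotL_left_add (m m' : Fin 3 → F) (v : Fin 3 → K) :
    dotL (ιv F (m + m')) v = dotL (ιv F m) v + dotL (ιv F m') v := by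
  simp [dotL_apply, ιv, add_mul, Finset.sum_add_distrib]

theorem dotL_left_smul (s : F) (m : Fin 3 → F) (v : Fin 3 → K) :
    dotL (ιv F (s • m)) v = algebraMap F K s * dotL (ιv F m) v := by
  simp [dotL_apply, ιv, Finset.mul_sum, mul_assoc]

theorem dotL_left_sub (m m' : Fin 3 → F) (v : Fin 3 → K) :
    dotL (ιv F (m - m')) v = dotL (ιv F m) v - dotL (ιv F m') v := by
  simp [dotL_apply, ιv, sub_mul, Finset.sum_sub_distrib]

theorem cond_transfer (g : (Fin 3 → K) ≃ₗ[K] (Fin 3 → K)) (m : Fin 3 → K)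
    {v : Fin 3 → K} (hv : v ≠ 0) :
    dotL m (g.symm (Projectivization.mk K v hv).rep) = 0 ↔ dotL m (g.symm v) = 0 := by
  obtain ⟨κ, hκ⟩ := Projectivization.exists_smul_eq_mk_rep K v hv
  rw [← hκ, Units.smul_def, map_smul, map_smul, smul_eq_mul, mul_eq_zero]
  simp [κ.ne_zero]

theorem L0_span : LinearMap.ker (LinearMap.proj 2 : (Fin 3 → K) →ₗ[K] K) =
    Submodule.span K {![1, 0, 0], ![0, 1, 0]} := by
  ext v
  rw [Submodule.mem_span_pair]
  constructor
  · intro hv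
    have h2 : v 2 = 0 := hv
    exact ⟨v 0, v 1, by funext i; fin_cases i <;> simp [h2]⟩
  · rintro ⟨x, y, rfl⟩
    simp [LinearMap.mem_ker]

theorem L0_rank : Module.finrank K
    (LinearMap.ker (LinearMap.proj 2 : (Fin 3 → K) →ₗ[K] K)) = 2 := by
  refine ker_finrank_two finrank_pi3 _ ?_
  intro hc
  have := congrArg (fun φ => (φ : (Fin 3 → K) →ₗ[K] K) (Pi.single 2 1)) hc
  simpa using this

theorem vsum (t₁ t₂ u₁ u₂ c : K) :
    ![u₁ + c * t₁, u₂ + c * t₂, (0:K)] = ![u₁, u₂, 0] + c • ![t₁, t₂, 0] := by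
  funext i; fin_cases i <;> simp

theorem phi_ne (g : (Fin 3 → K) ≃ₗ[K] (Fin 3 → K)) {n : Fin 3 → F} (hn0 : n ≠ 0) :
    (dotL (ιv F n)) ∘ₗ g.symm.toLinearMap ≠ 0 := by
  obtain ⟨i, hi⟩ : ∃ i, n i ≠ 0 := by
    by_contra hc; push_neg at hc; exact hn0 (funext hc)
  intro hc
  have h := congrArg (fun ψ => (ψ : (Fin 3 → K) →ₗ[K] K) (g (Pi.single i 1))) hc
  simp only [LinearMap.comp_apply, LinearEquiv.coe_coe, LinearMap.zero_apply,
    LinearEquiv.symm_apply_apply] at h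
  rw [dotL_apply] at h
  simp only [ιv, Pi.single_apply, mul_ite, mul_one, mul_zero,
    Finset.sum_ite_eq', Finset.mem_univ, if_true] at h
  exact hi ((algebraMap F K).injective (by simpa using h))

end UniqHelpers

section Uniq
variable {F K : Type} [Field F] [Field K] [Algebra F K]

theorem uniq_splash (g : (Fin 3 → K) ≃ₗ[K] (Fin 3 → K)) {t₁ t₂ u₁ u₂ a b : K}
    (hD : u₁ * t₂ - u₂ * t₁ ≠ 0) (ha : a ≠ 0)
    (hab : ∀ lam : F, b ≠ algebraMap F K lam * a)
    (htan : (hmap g '' basePlane F K) ∩ linf K =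
      {Projectivization.mk K ![t₁, t₂, 0] (vne (hnt hD))})
    (hU : Projectivization.mk K ![u₁, u₂, 0] (vne (hnu hD)) ∈
      splash (hmap g '' basePlane F K))
    (hV : mcoord hD a ∈ splash (hmap g '' basePlane F K))
    (hW : mcoord hD b ∈ splash (hmap g '' basePlane F K)) :
    splash (hmap g '' basePlane F K) =
      insert (Projectivization.mk K ![t₁, t₂, 0] (vne (hnt hD)))
        {X | ∃ p q : F, X = mcoord hD (algebraMap F K p * a + algebraMap F K q * b)} := by
  have hb : b ≠ 0 := by
    intro hb0
    exact hab 0 (by rw [hb0, map_zero, zero_mul])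
  -- T belongs to the subplane
  have hTπ : Projectivization.mk K ![t₁, t₂, 0] (vne (hnt hD)) ∈ hmap g '' basePlane F K := by
    have h : Projectivization.mk K ![t₁, t₂, 0] (vne (hnt hD)) ∈
        (hmap g '' basePlane F K) ∩ linf K := by rw [htan]; exact rfl
    exact h.1
  obtain ⟨f₀, hf₀, hTeq⟩ := (mem_subplane_iff g _).mp hTπ
  obtain ⟨κ, hκ⟩ := (Projectivization.mk_eq_mk_iff' K _ _ _ _).mp hTeq
  -- hκ : κ • g (ιv F f₀) = ![t₁, t₂, 0]
  have hκ0 : κ ≠ 0 := by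
    rintro rfl
    rw [zero_smul] at hκ
    exact (vne (hnt hD)) hκ.symm
  have hBval : ∀ n : Fin 3 → F,
      dotL (ιv F n) (g.symm ![t₁, t₂, 0]) = κ * algebraMap F K (dotL f₀ n) := by
    intro n
    have hsymm : g.symm ![t₁, t₂, 0] = κ • ιv F f₀ := by
      rw [← hκ, map_smul, g.symm_apply_apply]
    rw [hsymm, map_smul, smul_eq_mul, dotL_ιv, dotL_comm]
  -- Claim I
  have claimI : ∀ n : Fin 3 → F, n ≠ 0 → dotL (ιv F n) (g.symm ![u₁, u₂, 0]) = 0 →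
      dotL (ιv F n) (g.symm ![t₁, t₂, 0]) = 0 → False := by
    intro n hn0 hAn hBn
    set φ := (dotL (ιv F n)) ∘ₗ g.symm.toLinearMap with hφ
    have hφne := phi_ne g hn0
    have hker2 := ker_finrank_two finrank_pi3 _ hφne
    have hUk : (![u₁, u₂, 0] : Fin 3 → K) ∈ LinearMap.ker φ := hAn
    have hTk : (![t₁, t₂, 0] : Fin 3 → K) ∈ LinearMap.ker φ := hBn
    have hL0 : LinearMap.ker (LinearMap.proj 2 : (Fin 3 → K) →ₗ[K] K) ≤ LinearMap.ker φ := by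
      rw [L0_span, Submodule.span_le]
      intro z hz
      rcases hz with rfl | hz
      · have hdec : (u₁ * t₂ - u₂ * t₁) • (![1, 0, 0] : Fin 3 → K) =
            t₂ • ![u₁, u₂, 0] + (-u₂) • ![t₁, t₂, 0] := by
          funext i; fin_cases i <;> (simp; try ring)
        have hmemD : (u₁ * t₂ - u₂ * t₁) • (![1, 0, 0] : Fin 3 → K) ∈ LinearMap.ker φ := by
          rw [hdec]
          exact Submodule.add_mem _ (Submodule.smul_mem _ _ hUk) (Submodule.smul_mem _ _ hTk)
        have h2 := Submodule.smul_mem _ (u₁ * t₂ - u₂ * t₁)⁻¹ hmemD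
        rwa [smul_smul, inv_mul_cancel₀ hD, one_smul] at h2
      · rcases hz with rfl
        have hdec : (u₁ * t₂ - u₂ * t₁) • (![0, 1, 0] : Fin 3 → K) =
            (-t₁) • ![u₁, u₂, 0] + u₁ • ![t₁, t₂, 0] := by
          funext i; fin_cases i <;> (simp; try ring)
        have hmemD : (u₁ * t₂ - u₂ * t₁) • (![0, 1, 0] : Fin 3 → K) ∈ LinearMap.ker φ := by
          rw [hdec]
          exact Submodule.add_mem _ (Submodule.smul_mem _ _ hUk) (Submodule.smul_mem _ _ hTk)
        have h2 := Submodule.smul_mem _ (u₁ * t₂ - u₂ * t₁)⁻¹ hmemD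
        rwa [smul_smul, inv_mul_cancel₀ hD, one_smul] at h2
    have hL0eq : LinearMap.ker (LinearMap.proj 2 : (Fin 3 → K) →ₗ[K] K) = LinearMap.ker φ :=
      Submodule.eq_of_le_of_finrank_eq hL0 (by rw [hker2, L0_rank])
    obtain ⟨f, f', hind, hd1, hd2⟩ := annih2 hn0
    have hf : f ≠ 0 := by simpa using hind.ne_zero 0
    have hf' : f' ≠ 0 := by simpa using hind.ne_zero 1
    have hm : ∀ (h : Fin 3 → F), dotL n h = 0 → (g (ιv F h)) 2 = 0 := by
      intro h hd
      have hmem : g (ιv F h) ∈ LinearMap.ker φ := by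
        rw [LinearMap.mem_ker, hφ, LinearMap.comp_apply]
        show dotL (ιv F n) (g.symm (g (ιv F h))) = 0
        rw [g.symm_apply_apply, dotL_ιv, hd, map_zero]
      rw [← hL0eq, LinearMap.mem_ker] at hmem
      exact hmem
    have hmem : ∀ (h : Fin 3 → F) (hh : h ≠ 0), dotL n h = 0 →
        Projectivization.mk K (g (ιv F h)) (fun hc => ιv_ne hh (g.map_eq_zero_iff.mp hc)) =
          Projectivization.mk K ![t₁, t₂, 0] (vne (hnt hD)) := by
      intro h hh hd
      have hx : Projectivization.mk K (g (ιv F h))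
          (fun hc => ιv_ne hh (g.map_eq_zero_iff.mp hc)) ∈
          (hmap g '' basePlane F K) ∩ linf K :=
        ⟨(mem_subplane_iff g _).mpr ⟨h, hh, rfl⟩, (mem_linf_mk _).mpr (hm h hd)⟩
      rw [htan] at hx
      exact hx
    exact pts_ne g hind _ _ ((hmem f hf hd1).trans (hmem f' hf' hd2).symm)
  -- witnesses from membership
  have hCc : ∀ (c : K), mcoord hD c ∈ splash (hmap g '' basePlane F K) →
      ∃ n : Fin 3 → F, n ≠ 0 ∧
        dotL (ιv F n) (g.symm ![u₁, u₂, 0]) +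
          c * dotL (ιv F n) (g.symm ![t₁, t₂, 0]) = 0 := by
    intro c hc
    obtain ⟨hl, n, hn0, hcond⟩ := (mem_splash_iff g _).mp hc
    refine ⟨n, hn0, ?_⟩
    unfold mcoord at hcond
    rw [cond_transfer] at hcond
    rw [vsum t₁ t₂ u₁ u₂ c, map_add, map_smul, map_add, map_smul, smul_eq_mul] at hcond
    exact hcond
  have hCc' : ∀ (c : K) (n : Fin 3 → F), n ≠ 0 →
      dotL (ιv F n) (g.symm ![u₁, u₂, 0]) +
        c * dotL (ιv F n) (g.symm ![t₁, t₂, 0]) = 0 →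
      mcoord hD c ∈ splash (hmap g '' basePlane F K) := by
    intro c n hn0 hcond
    rw [mem_splash_iff]
    refine ⟨mcoord_mem_linf hD c, n, hn0, ?_⟩
    unfold mcoord
    rw [cond_transfer, vsum t₁ t₂ u₁ u₂ c, map_add, map_smul, map_add, map_smul, smul_eq_mul]
    exact hcond
  -- normalization
  have hnorm : ∀ (c : K) (n : Fin 3 → F), n ≠ 0 →
      dotL (ιv F n) (g.symm ![u₁, u₂, 0]) +
        c * dotL (ιv F n) (g.symm ![t₁, t₂, 0]) = 0 →
      ∃ n' : Fin 3 → F, dotL f₀ n' = 1 ∧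
        dotL (ιv F n') (g.symm ![u₁, u₂, 0]) + c * κ = 0 := by
    intro c n hn0 hcond
    have hs : dotL f₀ n ≠ 0 := by
      intro hs0
      have hBn : dotL (ιv F n) (g.symm ![t₁, t₂, 0]) = 0 := by
        rw [hBval n, hs0, map_zero, mul_zero]
      have hAn : dotL (ιv F n) (g.symm ![u₁, u₂, 0]) = 0 := by
        rwa [hBn, mul_zero, add_zero] at hcond
      exact claimI n hn0 hAn hBn
    refine ⟨(dotL f₀ n)⁻¹ • n, ?_, ?_⟩
    · rw [map_smul, smul_eq_mul, inv_mul_cancel₀ hs]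
    · rw [dotL_left_smul]
      have h1 : dotL (ιv F n) (g.symm ![t₁, t₂, 0]) = κ * algebraMap F K (dotL f₀ n) :=
        hBval n
      have h2 : algebraMap F K ((dotL f₀ n)⁻¹) * algebraMap F K (dotL f₀ n) = 1 := by
        rw [← map_mul, inv_mul_cancel₀ hs, map_one]
      linear_combination algebraMap F K ((dotL f₀ n)⁻¹) * hcond -
        c * algebraMap F K ((dotL f₀ n)⁻¹) * h1 - c * κ * h2
  -- the three normalized witnesses
  have hU' : mcoord hD 0 ∈ splash (hmap g '' basePlane F K) := by
    rw [mcoord_zero hD]; exact hU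
  obtain ⟨nu, hnu0, hnuc⟩ := hCc 0 hU'
  obtain ⟨nU', hnU'1, hnU'A⟩ := hnorm 0 nu hnu0 hnuc
  have hAnU' : dotL (ιv F nU') (g.symm ![u₁, u₂, 0]) = 0 := by
    linear_combination hnU'A
  obtain ⟨nva, hnva0, hnvac⟩ := hCc a hV
  obtain ⟨na, hna1, hnaA⟩ := hnorm a nva hnva0 hnvac
  obtain ⟨nvb, hnvb0, hnvbc⟩ := hCc b hW
  obtain ⟨nb, hnb1, hnbA⟩ := hnorm b nvb hnvb0 hnvbc
  set pa := na - nU' with hpadef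
  set pb := nb - nU' with hpbdef
  have hpa0 : dotL f₀ pa = 0 := by rw [hpadef, map_sub, hna1, hnU'1, sub_self]
  have hpb0 : dotL f₀ pb = 0 := by rw [hpbdef, map_sub, hnb1, hnU'1, sub_self]
  have hApa : dotL (ιv F pa) (g.symm ![u₁, u₂, 0]) = -(a * κ) := by
    rw [hpadef, dotL_left_sub, hAnU', sub_zero]
    linear_combination hnaA
  have hApb : dotL (ιv F pb) (g.symm ![u₁, u₂, 0]) = -(b * κ) := by
    rw [hpbdef, dotL_left_sub, hAnU', sub_zero]
    linear_combination hnbA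
  have hBpa : dotL (ιv F pa) (g.symm ![t₁, t₂, 0]) = 0 := by
    rw [hBval, hpa0, map_zero, mul_zero]
  have hpa_ne : pa ≠ 0 := by
    intro h0
    rw [h0] at hApa
    simp only [ιv, Pi.zero_apply, map_zero, dotL_apply, zero_mul,
      Finset.sum_const_zero] at hApa
    exact mul_ne_zero ha hκ0 (by linear_combination hApa)
  have hind : LinearIndependent F ![pa, pb] := by
    rw [LinearIndependent.pair_iff]
    intro s t hst
    have hz : dotL (ιv F (s • pa + t • pb)) (g.symm ![u₁, u₂, 0]) = 0 := by
      rw [hst]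
      simp [ιv, dotL_apply]
    rw [dotL_left_add, dotL_left_smul, dotL_left_smul, hApa, hApb] at hz
    have h1 : (algebraMap F K s * a + algebraMap F K t * b) * κ = 0 := by
      linear_combination -hz
    have h2 := (mul_eq_zero.mp h1).resolve_right hκ0
    exact hFind ha hab s t h2
  have hspan : Submodule.span F {pa, pb} = LinearMap.ker (dotL f₀) := by
    apply Submodule.eq_of_le_of_finrank_eq
    · rw [Submodule.span_le]
      intro z hz
      rcases hz with rfl | hz
      · exact hpa0
      · rcases hz with rfl
        exact hpb0
    · rw [ker_finrank_two (by simp) _ (dotL_ne_zero hf₀)]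
      have h := finrank_span_eq_card hind
      rw [show Set.range ![pa, pb] = {pa, pb} from Matrix.range_cons_cons_empty pa pb _] at h
      simpa using h
  -- the set equality
  ext X
  constructor
  · intro hX
    by_cases hXT : X = Projectivization.mk K ![t₁, t₂, 0] (vne (hnt hD))
    · rw [hXT]; exact Set.mem_insert _ _
    · have hXl : X ∈ linf K := ((mem_splash_iff g X).mp hX).1
      obtain ⟨c, rfl⟩ := exists_mcoord hD hXl hXT
      obtain ⟨n, hn0, hcond⟩ := hCc c hX
      obtain ⟨n', hn'1, hn'A⟩ := hnorm c n hn0 hcond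
      set pc := n' - nU' with hpcdef
      have hpc0 : dotL f₀ pc = 0 := by rw [hpcdef, map_sub, hn'1, hnU'1, sub_self]
      have hApc : dotL (ιv F pc) (g.symm ![u₁, u₂, 0]) = -(c * κ) := by
        rw [hpcdef, dotL_left_sub, hAnU', sub_zero]
        linear_combination hn'A
      have hmemP : pc ∈ Submodule.span F {pa, pb} := by
        rw [hspan]
        exact hpc0
      obtain ⟨s, t, hst⟩ := Submodule.mem_span_pair.mp hmemP
      have h3 : dotL (ιv F pc) (g.symm ![u₁, u₂, 0]) =
          algebraMap F K s * -(a * κ) + algebraMap F K t * -(b * κ) := by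
        rw [← hst, dotL_left_add, dotL_left_smul, dotL_left_smul, hApa, hApb]
      have hc : c = algebraMap F K s * a + algebraMap F K t * b := by
        have h5 : (c - (algebraMap F K s * a + algebraMap F K t * b)) * κ = 0 := by
          linear_combination hApc - h3
        have h6 := (mul_eq_zero.mp h5).resolve_right hκ0
        linear_combination h6
      exact Set.mem_insert_iff.mpr (Or.inr ⟨s, t, by rw [hc]⟩)
  · intro hX
    rcases Set.mem_insert_iff.mp hX with rfl | ⟨p, q, rfl⟩
    · rw [mem_splash_iff]
      refine ⟨(mem_linf_mk _).mpr (by simp), pa, hpa_ne, ?_⟩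
      rw [cond_transfer]
      exact hBpa
    · have hd1 : dotL f₀ (nU' + (p • pa + q • pb)) = 1 := by
        rw [map_add, map_add, map_smul, map_smul, hnU'1, hpa0, hpb0]
        simp
      apply hCc' _ (nU' + (p • pa + q • pb))
      · intro h0
        rw [h0, map_zero] at hd1
        exact zero_ne_one hd1
      · have hA : dotL (ιv F (nU' + (p • pa + q • pb))) (g.symm ![u₁, u₂, 0]) =
            -((algebraMap F K p * a + algebraMap F K q * b) * κ) := by
          rw [dotL_left_add, dotL_left_add, dotL_left_smul, dotL_left_smul, hAnU',
            hApa, hApb]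
          ring
        have hB : dotL (ιv F (nU' + (p • pa + q • pb))) (g.symm ![t₁, t₂, 0]) = κ := by
          rw [hBval, hd1, map_one, mul_one]
        rw [hA, hB]
        ring

end Uniq

section Exist
variable {F K : Type} [Field F] [Field K] [Algebra F K]

theorem exist_tangent {t₁ t₂ u₁ u₂ a b : K}
    (hD : u₁ * t₂ - u₂ * t₁ ≠ 0) (ha : a ≠ 0)
    (hab : ∀ lam : F, b ≠ algebraMap F K lam * a) :
    ∃ g : (Fin 3 → K) ≃ₗ[K] (Fin 3 → K),
      (hmap g '' basePlane F K) ∩ linf K =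
        {Projectivization.mk K ![t₁, t₂, 0] (vne (hnt hD))} ∧
      Projectivization.mk K ![u₁, u₂, 0] (vne (hnu hD)) ∈
        splash (hmap g '' basePlane F K) ∧
      mcoord hD a ∈ splash (hmap g '' basePlane F K) ∧
      mcoord hD b ∈ splash (hmap g '' basePlane F K) := by
  set M : Matrix (Fin 3) (Fin 3) K :=
    !![-u₂, u₁, 0; -(a*t₂), a*t₁, 0; -(b*t₂), b*t₁, 1] with hM
  have hdet : M.det = a * (u₁ * t₂ - u₂ * t₁) := by
    rw [hM, Matrix.det_fin_three]
    simp
    ring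
  have hinv : Invertible M := M.invertibleOfIsUnitDet
    (by rw [hdet]; exact (mul_ne_zero ha hD).isUnit)
  set g := (M.toLinearEquiv' hinv).symm with hg
  have hgs : ∀ v, g.symm v = M.mulVec v := fun v => rfl
  have hmul : ∀ x y : K, M.mulVec ![x, y, 0] =
      ![u₁ * y - u₂ * x, a * (t₁ * y - t₂ * x), b * (t₁ * y - t₂ * x)] := by
    intro x y
    funext j
    fin_cases j <;>
      simp [hM, Matrix.mulVec, dotProduct, Fin.sum_univ_three] <;> ring
  have hsp : ∀ (c : K) (n : Fin 3 → F), n ≠ 0 →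
      algebraMap F K (n 0) * c -
        (algebraMap F K (n 1) * a + algebraMap F K (n 2) * b) = 0 →
      mcoord hD c ∈ splash (hmap g '' basePlane F K) := by
    intro c n hn0 hcond
    rw [mem_splash_iff]
    refine ⟨mcoord_mem_linf hD c, n, hn0, ?_⟩
    unfold mcoord
    rw [cond_transfer, hgs, hmul, dotL_apply]
    simp only [ιv, Fin.sum_univ_three, Matrix.cons_val_zero, Matrix.cons_val_one,
      Matrix.head_cons, Matrix.cons_val_two, Matrix.tail_cons]
    linear_combination (u₁ * t₂ - u₂ * t₁) * hcond
  refine ⟨g, ?_, ?_, ?_, ?_⟩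
  · ext X
    constructor
    · rintro ⟨hXS, hXl⟩
      obtain ⟨f, hf, hXeq⟩ := (mem_subplane_iff g X).mp hXS
      subst hXeq
      have hvne : g (ιv F f) ≠ 0 := fun hc => ιv_ne hf (g.map_eq_zero_iff.mp hc)
      have h2 : (g (ιv F f)) 2 = 0 := (mem_linf_mk _).mp hXl
      have hveq : g (ιv F f) = ![g (ιv F f) 0, g (ιv F f) 1, 0] := by
        funext i; fin_cases i <;> simp [h2]
      have hMv : M.mulVec ![g (ιv F f) 0, g (ιv F f) 1, 0] = ιv F f := by
        rw [← hveq, ← hgs]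
        exact g.symm_apply_apply _
      rw [hmul] at hMv
      have h0 : u₁ * (g (ιv F f) 1) - u₂ * (g (ιv F f) 0) = algebraMap F K (f 0) := by
        simpa [ιv] using congrFun hMv 0
      have h1 : a * (t₁ * (g (ιv F f) 1) - t₂ * (g (ιv F f) 0)) = algebraMap F K (f 1) := by
        simpa [ιv] using congrFun hMv 1
      have h2' : b * (t₁ * (g (ιv F f) 1) - t₂ * (g (ιv F f) 0)) = algebraMap F K (f 2) := by
        simpa [ιv] using congrFun hMv 2
      have hne01 : ¬(g (ιv F f) 0 = 0 ∧ g (ιv F f) 1 = 0) := by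
        rintro ⟨ha0, ha1⟩
        apply hvne
        rw [hveq, ha0, ha1]
        funext i; fin_cases i <;> simp
      by_cases hβ : t₁ * (g (ιv F f) 1) - t₂ * (g (ιv F f) 0) = 0
      · have hXT : Projectivization.mk K (g (ιv F f)) hvne =
            Projectivization.mk K ![t₁, t₂, 0] (vne (hnt hD)) := by
          calc Projectivization.mk K (g (ιv F f)) hvne
              = Projectivization.mk K ![g (ιv F f) 0, g (ιv F f) 1, 0] (vne hne01) :=
                mk_eq_of_eq hveq _ _
            _ = Projectivization.mk K ![t₁, t₂, 0] (vne (hnt hD)) := by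
                rw [pt_eq_iff hne01 (hnt hD)]
                linear_combination -hβ
        exact hXT
      · exfalso
        have hf1 : f 1 ≠ 0 := by
          intro hf10
          rw [hf10, map_zero] at h1
          exact hβ ((mul_eq_zero.mp h1).resolve_left ha)
        have hιf1 : algebraMap F K (f 1) ≠ 0 := by simpa using hf1
        apply hab (f 2 / f 1)
        rw [map_div₀, div_mul_eq_mul_div, eq_div_iff hιf1]
        linear_combination a * h2' - b * h1
    · intro hX
      rcases hX with rfl
      have hι1 : ιv F (![1, 0, 0] : Fin 3 → F) = (![1, 0, 0] : Fin 3 → K) := by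
        funext i; fin_cases i <;> simp [ιv]
      have hb1 : (![1, 0, 0] : Fin 3 → F) ≠ 0 := by
        intro h; simpa using congrFun h 0
      have h5 : (![(1:K), 0, 0] : Fin 3 → K) =
          g.symm ((u₁ * t₂ - u₂ * t₁)⁻¹ • ![t₁, t₂, 0]) := by
        rw [map_smul, hgs, hmul]
        funext i
        fin_cases i <;>
          simp only [Pi.smul_apply, Fin.reduceFinMk, Matrix.cons_val_zero, Matrix.cons_val_one,
            Matrix.head_cons, Matrix.cons_val_two, Matrix.tail_cons, smul_eq_mul] <;>
          (try field_simp) <;> (try ring) <;> (try tauto)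
      have h6 : g ![(1:K), 0, 0] = (u₁ * t₂ - u₂ * t₁)⁻¹ • ![t₁, t₂, 0] := by
        rw [h5, g.apply_symm_apply]
      constructor
      · rw [mem_subplane_iff g]
        refine ⟨![1, 0, 0], hb1, ?_⟩
        calc Projectivization.mk K ![t₁, t₂, 0] (vne (hnt hD))
            = Projectivization.mk K ((u₁ * t₂ - u₂ * t₁)⁻¹ • ![t₁, t₂, 0])
              (smul_ne_zero (inv_ne_zero hD) (vne (hnt hD))) :=
              (mk_smul_eq _ (inv_ne_zero hD)).symm
          _ = _ := mk_eq_of_eq (by rw [hι1, h6]) _ _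
      · exact (mem_linf_mk _).mpr (by simp)
  · rw [← mcoord_zero hD]
    refine hsp 0 ![1, 0, 0] (by intro h; simpa using congrFun h 0) ?_
    simp
  · refine hsp a ![1, 1, 0] (by intro h; simpa using congrFun h 0) ?_
    simp
  · refine hsp b ![1, 0, 1] (by intro h; simpa using congrFun h 0) ?_
    simp

end Exist

/-- four distinct points `T, U, V, W` of `ℓ∞` not on a common
order-`q`-subline lie in a unique tangent splash with centre `T`. -/
theorem statement15 (q : ℕ) (F K : Type) [Field F] [Field K] [Fintype F] [Fintype K]
    [Algebra F K] (hF : Fintype.card F = q) (hK : Fintype.card K = q ^ 3)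
    (T U V W : PGPoint K)
    (hT : T ∈ linf K) (hU : U ∈ linf K) (hV : V ∈ linf K) (hW : W ∈ linf K)
    (hTU : T ≠ U) (hTV : T ≠ V) (hTW : T ≠ W) (hUV : U ≠ V) (hUW : U ≠ W) (hVW : V ≠ W)
    (hnoline : ¬ ∃ b : Set (PGPoint K),
        IsSubline F q b ∧ T ∈ b ∧ U ∈ b ∧ V ∈ b ∧ W ∈ b) :
    ∃! S : Set (PGPoint K), IsTangentSplash F S T ∧ U ∈ S ∧ V ∈ S ∧ W ∈ S := by
  obtain ⟨t₁, t₂, hnt', hTmk0⟩ := linf_rep hT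
  obtain ⟨u₁, u₂, hnu', hUmk0⟩ := linf_rep hU
  have hD : u₁ * t₂ - u₂ * t₁ ≠ 0 := by
    intro h0
    apply hTU
    rw [hTmk0, hUmk0, pt_eq_iff hnt' hnu']
    linear_combination -h0
  have hTmk : T = Projectivization.mk K ![t₁, t₂, 0] (vne (hnt hD)) := hTmk0
  have hUmk : U = Projectivization.mk K ![u₁, u₂, 0] (vne (hnu hD)) := hUmk0
  have hVT : V ≠ Projectivization.mk K ![t₁, t₂, 0] (vne (hnt hD)) := by
    rw [← hTmk]
    exact hTV.symm
  have hWT : W ≠ Projectivization.mk K ![t₁, t₂, 0] (vne (hnt hD)) := by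
    rw [← hTmk]
    exact hTW.symm
  obtain ⟨a, hVa⟩ := exists_mcoord hD hV hVT
  obtain ⟨b, hWb⟩ := exists_mcoord hD hW hWT
  have ha : a ≠ 0 := by
    rintro rfl
    apply hUV
    rw [hUmk, hVa, mcoord_zero hD]
  have hab : ∀ lam : F, b ≠ algebraMap F K lam * a := by
    intro lam hblam
    obtain ⟨bs, hbs, hTb, hUb, hVb, hWb'⟩ := subline_exists hF hD ha lam
    exact hnoline ⟨bs, hbs, by rw [hTmk]; exact hTb, by rw [hUmk]; exact hUb,
      by rw [hVa]; exact hVb, by rw [hWb, hblam]; exact hWb'⟩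
  obtain ⟨g, htan, hU₀, hV₀, hW₀⟩ := exist_tangent hD ha hab
  refine ⟨splash (hmap g '' basePlane F K),
    ⟨⟨hmap g '' basePlane F K, ⟨g, rfl⟩, ?_, rfl⟩, ?_, ?_, ?_⟩, ?_⟩
  · rw [hTmk]
    exact htan
  · rw [hUmk]
    exact hU₀
  · rw [hVa]
    exact hV₀
  · rw [hWb]
    exact hW₀
  · rintro S' ⟨⟨π', ⟨g', rfl⟩, htan', rfl⟩, hU', hV', hW'⟩
    have e1 := uniq_splash g' hD ha hab (by rw [← hTmk]; exact htan')
      (by rw [← hUmk]; exact hU') (by rw [← hVa]; exact hV') (by rw [← hWb]; exact hW')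
    have e2 := uniq_splash g hD ha hab htan hU₀ hV₀ hW₀
    rw [e1, e2]

end TangentSplashPaper
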